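/- Let p > 1 and let s : ℕ₀ → (0,∞) satisfy s(n) = n^p·L(n) for all n ≥ 1, where L : (0,∞) → (0,∞) is measurable and slowly varying. Let G > 0 and H ≥ 0, and set f(i) := G·s(i) + H for i ∈ ℕ₀. Then ∑_{i=n}^∞ 1/f(i) < ∞ for every n, and lim_{n→∞} (∑_{i=n}^∞ 1/f(i)) · G·(p−1)·s(n)/n = 1; that is, ∑_{i=n}^∞ 1/f(i) = (1+o(1)) · n/(G·(p−1)·s(n)) as n → ∞. -/

import Mathlib

open Filter MeasureTheory Set

lemma uct (h : ℝ → ℝ) (hm : Measurable h)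
    (hc : ∀ t : ℝ, Tendsto (fun x => h (x + t) - h x) atTop (nhds 0)) :
    ∀ ε : ℝ, 0 < ε → ∃ X : ℝ, ∀ x ≥ X, ∀ t ∈ Set.Icc (0:ℝ) 1, |h (x + t) - h x| ≤ ε := by
  intro ε hε
  by_contra hcon
  push_neg at hcon
  choose xx hxx tt htt hbad using hcon
  set y : ℕ → ℝ := fun n => xx (n : ℝ) with hy_def
  set τ : ℕ → ℝ := fun n => tt (n : ℝ) with hτ_def
  have hy : Tendsto y atTop atTop :=
    tendsto_atTop_mono (fun n => hxx (n : ℝ)) tendsto_natCast_atTop_atTop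
  have hyτ : Tendsto (fun n => y n + τ n) atTop atTop := by
    apply tendsto_atTop_mono (fun n => ?_) hy
    have := (htt (n : ℝ)).1
    simp only [τ]
    linarith
  set E : ℕ → Set ℝ := fun k =>
    Set.Icc (0:ℝ) 2 ∩ ⋂ n ∈ Set.Ici k,
      ({u | |h (y n + u) - h (y n)| ≤ ε/2} ∩ {u | |h (y n + τ n + u) - h (y n + τ n)| ≤ ε/2})
    with hE_def
  have hEmeas : ∀ k, MeasurableSet (E k) := by
    intro k
    apply measurableSet_Icc.inter
    apply MeasurableSet.biInter (Set.to_countable _)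
    intro n _
    apply MeasurableSet.inter
    · exact measurableSet_le ((hm.comp (measurable_const_add (y n))).sub measurable_const).abs
        measurable_const
    · exact measurableSet_le ((hm.comp (measurable_const_add (y n + τ n))).sub
        measurable_const).abs measurable_const
  have hEmono : Monotone E := by
    intro k k' hkk'
    apply Set.inter_subset_inter_right
    exact Set.biInter_subset_biInter_left (fun n hn => le_trans hkk' hn)
  have hEunion : (⋃ k, E k) = Set.Icc (0:ℝ) 2 := by
    apply Set.Subset.antisymm
    · exact Set.iUnion_subset fun k => Set.inter_subset_left
    · intro u hu
      have h1 : ∀ᶠ n in atTop, |h (y n + u) - h (y n)| ≤ ε/2 := by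
        have := ((hc u).comp hy).eventually (eventually_abs_sub_lt 0 (by positivity : (0:ℝ) < ε/2))
        filter_upwards [this] with n hn
        simpa [abs_sub_comm] using hn.le
      have h2 : ∀ᶠ n in atTop, |h (y n + τ n + u) - h (y n + τ n)| ≤ ε/2 := by
        have := ((hc u).comp hyτ).eventually (eventually_abs_sub_lt 0 (by positivity : (0:ℝ) < ε/2))
        filter_upwards [this] with n hn
        simpa [abs_sub_comm] using hn.le
      obtain ⟨k, hk⟩ := (h1.and h2).exists_forall_of_atTop
      exact Set.mem_iUnion.2 ⟨k, hu, Set.mem_biInter fun n hn => ⟨(hk n hn).1, (hk n hn).2⟩⟩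
  have hvol : Tendsto (fun k => volume (E k)) atTop (nhds (volume (Set.Icc (0:ℝ) 2))) := by
    have := tendsto_measure_iUnion_atTop (μ := volume) hEmono
    rwa [hEunion] at this
  have hvol2 : volume (Set.Icc (0:ℝ) 2) = ENNReal.ofReal 2 := by
    rw [Real.volume_Icc]; norm_num
  have hbig : ∀ᶠ k in atTop, ENNReal.ofReal (3/2) < volume (E k) := by
    apply Filter.Tendsto.eventually_const_lt _ hvol
    rw [hvol2]
    exact (ENNReal.ofReal_lt_ofReal_iff (by norm_num)).2 (by norm_num)
  obtain ⟨k, hk⟩ := hbig.exists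
  set B : Set ℝ := (fun u => u + τ k) ⁻¹' (E k) with hB_def
  have hvolB : volume B = volume (E k) := measure_preimage_add_right volume (τ k) (E k)
  have hABsub : E k ∪ B ⊆ Set.Icc (-1 : ℝ) 2 := by
    intro u hu
    rcases hu with hu | hu
    · have := hu.1; exact ⟨by linarith [this.1], this.2⟩
    · have h1 : u + τ k ∈ Set.Icc (0:ℝ) 2 := hu.1
      have h2 := htt (k:ℝ)
      constructor
      · have := h1.1; have := h2.2; simp only [τ] at *; linarith [h2.2]
      · have := h1.2; have := h2.1; linarith [h2.1]
  have hAB : (E k ∩ B).Nonempty := by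
    rw [Set.nonempty_iff_ne_empty]
    intro hemp
    have hdisj : Disjoint (E k) B := Set.disjoint_iff_inter_eq_empty.2 hemp
    have hunion : volume (E k ∪ B) = volume (E k) + volume B :=
      measure_union hdisj (hEmeas k |>.preimage (measurable_add_const (τ k)))
    have hle : volume (E k ∪ B) ≤ ENNReal.ofReal 3 := by
      calc volume (E k ∪ B) ≤ volume (Set.Icc (-1:ℝ) 2) := measure_mono hABsub
      _ = ENNReal.ofReal 3 := by rw [Real.volume_Icc]; norm_num
    rw [hunion, hvolB] at hle
    have : ENNReal.ofReal 3 < volume (E k) + volume (E k) := by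
      have h32 : ENNReal.ofReal 3 = ENNReal.ofReal (3/2) + ENNReal.ofReal (3/2) := by
        rw [← ENNReal.ofReal_add (by norm_num) (by norm_num)]; norm_num
      rw [h32]
      exact ENNReal.add_lt_add hk hk
    exact absurd hle this.not_ge
  obtain ⟨w, hwE, hwB⟩ := hAB
  have hwE' := Set.mem_iInter₂.1 hwE.2 k (le_refl k)
  have hwB' := Set.mem_iInter₂.1 (Set.mem_preimage.1 hwB).2 k (le_refl k)
  have hw1 : |h (y k + τ k + w) - h (y k + τ k)| ≤ ε/2 := hwE'.2
  have hw2 : |h (y k + (w + τ k)) - h (y k)| ≤ ε/2 := hwB'.1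
  have hfin : |h (y k + τ k) - h (y k)| ≤ ε := by
    have heq : y k + (w + τ k) = y k + τ k + w := by ring
    rw [heq] at hw2
    calc |h (y k + τ k) - h (y k)|
        = |(h (y k + τ k + w) - h (y k)) - (h (y k + τ k + w) - h (y k + τ k))| := by ring_nf
      _ ≤ |h (y k + τ k + w) - h (y k)| + |h (y k + τ k + w) - h (y k + τ k)| := abs_sub _ _
      _ ≤ ε/2 + ε/2 := add_le_add hw2 hw1
      _ = ε := by ring
  exact absurd hfin (not_le.2 (hbad (k:ℝ)))

lemma uct_chain (h : ℝ → ℝ) (hm : Measurable h)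
    (hc : ∀ t : ℝ, Tendsto (fun x => h (x + t) - h x) atTop (nhds 0))
    (ε : ℝ) (hε : 0 < ε) :
    ∃ X : ℝ, ∀ k : ℕ, ∀ x ≥ X, ∀ t ∈ Set.Icc (0:ℝ) ((k:ℝ) + 1),
      |h (x + t) - h x| ≤ ε * ((k:ℝ) + 1) := by
  obtain ⟨X, hX⟩ := uct h hm hc ε hε
  refine ⟨X, fun k => ?_⟩
  induction k with
  | zero =>
    intro x hx t ht
    simpa using (hX x hx t (by simpa using ht)).trans (by nlinarith)
  | succ m ih =>
    intro x hx t ht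
    rcases le_or_gt t 1 with h1 | h1
    · have := hX x hx t ⟨ht.1, h1⟩
      have hε1 : ε ≤ ε * ((m:ℝ) + 1 + 1) := by nlinarith [Nat.cast_nonneg (α := ℝ) m]
      push_cast
      push_cast at hε1
      linarith
    · have hx1 : x + 1 ≥ X := by linarith
      have ht' : t - 1 ∈ Set.Icc (0:ℝ) ((m:ℝ) + 1) := by
        constructor
        · linarith
        · push_cast at ht ⊢; linarith [ht.2]
      have h2 := ih (x + 1) hx1 (t - 1) ht'
      have h3 := hX x hx 1 (by norm_num)
      have heq : x + 1 + (t - 1) = x + t := by ring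
      rw [heq] at h2
      calc |h (x + t) - h x| = |(h (x + t) - h (x + 1)) + (h (x + 1) - h x)| := by ring_nf
        _ ≤ |h (x + t) - h (x + 1)| + |h (x + 1) - h x| := abs_add_le _ _
        _ ≤ ε * ((m:ℝ) + 1) + ε := add_le_add h2 h3
        _ = ε * ((m:ℝ) + 1 + 1) := by ring
        _ = ε * ((↑(m + 1):ℝ) + 1) := by push_cast; ring

-- uniform convergence on [0,T]
lemma h_unif (h : ℝ → ℝ) (hm : Measurable h)
    (hc : ∀ t : ℝ, Tendsto (fun x => h (x + t) - h x) atTop (nhds 0))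
    (ε T : ℝ) (hε : 0 < ε) (hT : 0 ≤ T) :
    ∃ X : ℝ, ∀ x ≥ X, ∀ t, 0 ≤ t → t ≤ T → |h (x + t) - h x| ≤ ε := by
  set k : ℕ := ⌊T⌋₊ with hk
  have hε' : 0 < ε / ((k:ℝ) + 1) := by positivity
  obtain ⟨X, hX⟩ := uct_chain h hm hc _ hε'
  refine ⟨X, fun x hx t ht0 htT => ?_⟩
  have htk : t ∈ Set.Icc (0:ℝ) ((k:ℝ) + 1) :=
    ⟨ht0, le_trans htT (le_of_lt (Nat.lt_floor_add_one T))⟩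
  have := hX k x hx t htk
  have hkpos : (0:ℝ) < (k:ℝ) + 1 := by positivity
  calc |h (x + t) - h x| ≤ ε / ((k:ℝ) + 1) * ((k:ℝ) + 1) := this
    _ = ε := by field_simp

-- potter-type bound
lemma h_potter (h : ℝ → ℝ) (hm : Measurable h)
    (hc : ∀ t : ℝ, Tendsto (fun x => h (x + t) - h x) atTop (nhds 0))
    (δ : ℝ) (hδ : 0 < δ) :
    ∃ X : ℝ, ∀ x ≥ X, ∀ t, 0 ≤ t → |h (x + t) - h x| ≤ δ * (t + 1) := by
  obtain ⟨X, hX⟩ := uct_chain h hm hc δ hδ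
  refine ⟨X, fun x hx t ht0 => ?_⟩
  set k : ℕ := ⌊t⌋₊ with hk
  have htk : t ∈ Set.Icc (0:ℝ) ((k:ℝ) + 1) := ⟨ht0, (Nat.lt_floor_add_one t).le⟩
  have := hX k x hx t htk
  have : |h (x + t) - h x| ≤ δ * ((k:ℝ) + 1) := this
  have hkt : (k:ℝ) ≤ t := Nat.floor_le ht0
  nlinarith

section Lstuff

lemma hLmeas' (L : ℝ → ℝ) (hLmeas : Measurable L) : Measurable (fun x : ℝ => Real.log (L (Real.exp x))) :=
  Real.measurable_log.comp (hLmeas.comp Real.measurable_exp)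

lemma hLc (L : ℝ → ℝ) (hLpos : ∀ x : ℝ, 0 < x → 0 < L x)
    (hLslow : ∀ a : ℝ, 0 < a → Tendsto (fun x => L (a * x) / L x) atTop (nhds 1)) : ∀ t : ℝ, Tendsto (fun x => Real.log (L (Real.exp (x + t))) - Real.log (L (Real.exp x)))
    atTop (nhds 0) := by
  intro t
  have h1 : Tendsto (fun y => L (Real.exp t * y) / L y) atTop (nhds 1) :=
    hLslow (Real.exp t) (Real.exp_pos t)
  have h2 : Tendsto (fun x => L (Real.exp t * Real.exp x) / L (Real.exp x)) atTop (nhds 1) :=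
    h1.comp Real.tendsto_exp_atTop
  have h3 : Tendsto (fun x => Real.log (L (Real.exp t * Real.exp x) / L (Real.exp x)))
      atTop (nhds 0) := by
    have := (Real.continuousAt_log (by norm_num : (1:ℝ) ≠ 0)).tendsto
    rw [Real.log_one] at this
    exact this.comp h2
  apply h3.congr'
  filter_upwards [eventually_ge_atTop (0:ℝ)] with x _
  rw [Real.log_div (ne_of_gt (hLpos _ (by positivity))) (ne_of_gt (hLpos _ (Real.exp_pos x)))]
  rw [← Real.exp_add]
  ring_nf

-- key identity
lemma hdiff_eq (L : ℝ → ℝ) (y u : ℝ) (hy : 0 < y) (hu : 0 < u) :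
    Real.log (L (Real.exp (Real.log y + Real.log u))) - Real.log (L (Real.exp (Real.log y)))
      = Real.log (L (u * y)) - Real.log (L y) := by
  rw [Real.exp_add, Real.exp_log hy, Real.exp_log hu, mul_comm]

lemma L_potter (L : ℝ → ℝ) (hLmeas : Measurable L) (hLpos : ∀ x : ℝ, 0 < x → 0 < L x)
    (hLslow : ∀ a : ℝ, 0 < a → Tendsto (fun x => L (a * x) / L x) atTop (nhds 1)) (δ : ℝ) (hδ : 0 < δ) :
    ∃ Y : ℝ, 1 ≤ Y ∧ ∀ y ≥ Y, ∀ u, 1 ≤ u → L y ≤ Real.exp δ * u ^ δ * L (u * y) := by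
  obtain ⟨X, hX⟩ := h_potter _ (hLmeas' L hLmeas) (hLc L hLpos hLslow) δ hδ
  refine ⟨max (Real.exp X) 1, le_max_right _ _, fun y hy u hu => ?_⟩
  have hy1 : (1:ℝ) ≤ y := le_trans (le_max_right _ _) hy
  have hy0 : 0 < y := by linarith
  have hu0 : 0 < u := by linarith
  have hxX : Real.log y ≥ X := by
    have : Real.exp X ≤ y := le_trans (le_max_left _ _) hy
    rw [← Real.log_exp X]
    exact Real.log_le_log (Real.exp_pos X) this
  have hlu : 0 ≤ Real.log u := Real.log_nonneg hu
  have hb := hX (Real.log y) hxX (Real.log u) hlu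
  simp only [hdiff_eq L y u hy0 hu0] at hb
  have hb2 : Real.log (L y) - Real.log (L (u * y)) ≤ δ * (Real.log u + 1) := by
    have := abs_le.1 hb
    linarith [this.1]
  have hLy : 0 < L y := hLpos y hy0
  have hLuy : 0 < L (u * y) := hLpos _ (by positivity)
  have hfin : L y / L (u * y) ≤ Real.exp (δ * (Real.log u + 1)) := by
    rw [← Real.exp_log (div_pos hLy hLuy)]
    apply Real.exp_le_exp.2
    rw [Real.log_div (ne_of_gt hLy) (ne_of_gt hLuy)]
    exact hb2
  have hexp : Real.exp (δ * (Real.log u + 1)) = Real.exp δ * u ^ δ := by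
    rw [Real.rpow_def_of_pos hu0]
    rw [← Real.exp_add]
    ring_nf
  rw [hexp] at hfin
  calc L y = L y / L (u * y) * L (u * y) := by field_simp
    _ ≤ Real.exp δ * u ^ δ * L (u * y) := by
        apply mul_le_mul_of_nonneg_right hfin (le_of_lt hLuy)

lemma L_unif (L : ℝ → ℝ) (hLmeas : Measurable L) (hLpos : ∀ x : ℝ, 0 < x → 0 < L x)
    (hLslow : ∀ a : ℝ, 0 < a → Tendsto (fun x => L (a * x) / L x) atTop (nhds 1)) (ε B : ℝ) (hε : 0 < ε) (hε1 : ε ≤ 1) (hB : 1 ≤ B) :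
    ∃ Y : ℝ, 1 ≤ Y ∧ ∀ y ≥ Y, ∀ u, 1 ≤ u → u ≤ B →
      (1 - ε) * L y ≤ L (u * y) ∧ L (u * y) ≤ (1 + ε) * L y := by
  obtain ⟨X, hX⟩ := h_unif _ (hLmeas' L hLmeas) (hLc L hLpos hLslow) (ε/2) (Real.log B)
    (by positivity) (Real.log_nonneg hB)
  refine ⟨max (Real.exp X) 1, le_max_right _ _, fun y hy u hu huB => ?_⟩
  have hy1 : (1:ℝ) ≤ y := le_trans (le_max_right _ _) hy
  have hy0 : 0 < y := by linarith
  have hu0 : 0 < u := by linarith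
  have hxX : Real.log y ≥ X := by
    have : Real.exp X ≤ y := le_trans (le_max_left _ _) hy
    rw [← Real.log_exp X]
    exact Real.log_le_log (Real.exp_pos X) this
  have hb := hX (Real.log y) hxX (Real.log u) (Real.log_nonneg hu)
    (Real.log_le_log hu0 huB)
  simp only [hdiff_eq L y u hy0 hu0] at hb
  have hLy : 0 < L y := hLpos y hy0
  have hLuy : 0 < L (u * y) := hLpos _ (by positivity)
  have hratio : Real.log (L (u * y) / L y) ∈ Set.Icc (-(ε/2)) (ε/2) := by
    rw [Real.log_div (ne_of_gt hLuy) (ne_of_gt hLy)]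
    exact abs_le.1 hb
  have h1 : L (u * y) / L y ≤ Real.exp (ε/2) := by
    rw [← Real.exp_log (div_pos hLuy hLy)]
    exact Real.exp_le_exp.2 hratio.2
  have h2 : Real.exp (-(ε/2)) ≤ L (u * y) / L y := by
    rw [← Real.exp_log (div_pos hLuy hLy)]
    exact Real.exp_le_exp.2 hratio.1
  have hup : Real.exp (ε/2) ≤ 1 + ε := by
    have h3 : Real.exp (ε/2) * Real.exp (-(ε/2)) = 1 := by
      rw [← Real.exp_add]; norm_num
    have h4 : 1 - ε/2 ≤ Real.exp (-(ε/2)) := by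
      have := Real.add_one_le_exp (-(ε/2)); linarith
    have h5 : 0 < Real.exp (-(ε/2)) := Real.exp_pos _
    nlinarith [Real.exp_pos (ε/2)]
  have hdown : 1 - ε ≤ Real.exp (-(ε/2)) := by
    have := Real.add_one_le_exp (-(ε/2)); linarith
  have h2' : Real.exp (-(ε/2)) * L y ≤ L (u * y) := (le_div_iff₀ hLy).1 h2
  have h1' : L (u * y) ≤ Real.exp (ε/2) * L y := (div_le_iff₀ hLy).1 h1
  constructor
  · nlinarith
  · nlinarith

end Lstuff

lemma mvt_step (q a : ℝ) (hq : 1 < q) (ha : 1 ≤ a) :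
    (a + 1) ^ (-q) * (q - 1) ≤ a ^ (1 - q) - (a + 1) ^ (1 - q) ∧
      a ^ (1 - q) - (a + 1) ^ (1 - q) ≤ a ^ (-q) * (q - 1) := by
  have ha0 : (0:ℝ) < a := by linarith
  have hcont : ContinuousOn (fun x : ℝ => x ^ (1 - q)) (Set.Icc a (a + 1)) := by
    intro x hx
    have hx0 : x ≠ 0 := by have := hx.1; intro h; rw [h] at this; linarith
    exact (Real.continuousAt_rpow_const x (1 - q) (Or.inl hx0)).continuousWithinAt
  have hderiv : ∀ x ∈ Set.Ioo a (a + 1),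
      HasDerivAt (fun x : ℝ => x ^ (1 - q)) ((1 - q) * x ^ (-q)) x := by
    intro x hx
    have hx0 : x ≠ 0 := by have := hx.1; intro h; rw [h] at this; linarith
    have := Real.hasDerivAt_rpow_const (x := x) (p := 1 - q) (Or.inl hx0)
    convert this using 2
    ring_nf
  obtain ⟨c, hc, hceq⟩ := exists_hasDerivAt_eq_slope (fun x : ℝ => x ^ (1 - q))
    (fun x => (1 - q) * x ^ (-q)) (by linarith : a < a + 1) hcont hderiv
  have hc0 : 0 < c := by have := hc.1; linarith
  have hslope : a ^ (1 - q) - (a + 1) ^ (1 - q) = (q - 1) * c ^ (-q) := by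
    have h2 : (a + 1) - a = 1 := by ring
    rw [h2, div_one] at hceq
    nlinarith [hceq]
  -- monotonicity of x ^ (-q): for 0 < x ≤ y, y^(-q) ≤ x^(-q)
  have hmono : ∀ x y_ : ℝ, 0 < x → x ≤ y_ → y_ ^ (-q) ≤ x ^ (-q) := by
    intro x y hx hxy
    have hy : 0 < y := lt_of_lt_of_le hx hxy
    rw [Real.rpow_neg hx.le, Real.rpow_neg hy.le]
    apply inv_anti₀ (Real.rpow_pos_of_pos hx q)
    exact Real.rpow_le_rpow hx.le hxy (by linarith)
  constructor
  · rw [hslope]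
    have := hmono c (a + 1) hc0 hc.2.le
    nlinarith
  · rw [hslope]
    have := hmono a c ha0 hc.1.le
    nlinarith

lemma tail_sum_bounds (q : ℝ) (hq : 1 < q) (n : ℕ) (hn : 1 ≤ n) :
    Summable (fun j : ℕ => ((n + j : ℕ) : ℝ) ^ (-q)) ∧
      (n:ℝ) ^ (1 - q) / (q - 1) ≤ (∑' j : ℕ, ((n + j : ℕ) : ℝ) ^ (-q)) ∧
      (∑' j : ℕ, ((n + j : ℕ) : ℝ) ^ (-q)) ≤ (n:ℝ) ^ (-q) + (n:ℝ) ^ (1 - q) / (q - 1) := by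
  have hq1 : (0:ℝ) < q - 1 := by linarith
  have hsum0 : Summable (fun i : ℕ => (i:ℝ) ^ (-q)) :=
    Real.summable_nat_rpow.2 (by linarith)
  have hsum : Summable (fun j : ℕ => ((n + j : ℕ) : ℝ) ^ (-q)) := by
    have := (summable_nat_add_iff (f := fun i : ℕ => (i:ℝ) ^ (-q)) n).2 hsum0
    apply this.congr
    intro j
    simp [Nat.add_comm]
  have hpos : ∀ i : ℕ, 1 ≤ i → (0:ℝ) < (i:ℝ) := by
    intro i hi; exact_mod_cast Nat.lt_of_lt_of_le Nat.zero_lt_one hi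
  -- F i = i^(1-q)
  set F : ℕ → ℝ := fun i => (i:ℝ) ^ (1 - q) with hF
  have hstep : ∀ i : ℕ, 1 ≤ i → ((i:ℝ) + 1) ^ (-q) * (q - 1) ≤ F i - F (i + 1) ∧
      F i - F (i + 1) ≤ (i:ℝ) ^ (-q) * (q - 1) := by
    intro i hi
    have h1 : (1:ℝ) ≤ (i:ℝ) := by exact_mod_cast hi
    have := mvt_step q (i:ℝ) hq h1
    simpa [hF, Nat.cast_add, Nat.cast_one] using this
  have hFto0 : Tendsto (fun m : ℕ => F (n + m)) atTop (nhds 0) := by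
    have h1 : Tendsto (fun x : ℝ => x ^ (-(q-1))) atTop (nhds 0) :=
      tendsto_rpow_neg_atTop hq1
    have h2 : Tendsto (fun m : ℕ => ((n + m : ℕ):ℝ)) atTop atTop := by
      apply tendsto_natCast_atTop_atTop.comp
      exact tendsto_add_atTop_nat n |>.comp tendsto_id |>.congr (fun m => by simp [Nat.add_comm])
    have := h1.comp h2
    apply this.congr
    intro m
    simp only [Function.comp, hF]
    congr 1
    ring
  constructor
  · exact hsum
  constructor
  · -- lower bound: F n ≤ (q-1) * tsum  ⇔ tsum ≥ F n / (q-1)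
    rw [div_le_iff₀ hq1]
    -- partial sums: F n - F (n+m) ≤ (q-1) * ∑_{j<m}
    have hpartial : ∀ m : ℕ, F n - F (n + m) ≤ (∑ j ∈ Finset.range m, ((n + j : ℕ) : ℝ) ^ (-q)) * (q - 1) := by
      intro m
      have htel : (∑ j ∈ Finset.range m, (F (n + j) - F (n + j + 1))) = F n - F (n + m) := by
        have := Finset.sum_range_sub' (fun j => F (n + j)) m
        simpa [add_assoc] using this
      rw [← htel, Finset.sum_mul]
      apply Finset.sum_le_sum
      intro j _
      have := (hstep (n + j) (le_trans hn (Nat.le_add_right n j))).2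
      push_cast at this ⊢
      convert this using 2 <;> push_cast <;> ring_nf
    have hlim : Tendsto (fun m => F n - F (n + m)) atTop (nhds (F n)) := by
      simpa using (tendsto_const_nhds (x := F n)).sub hFto0
    apply le_of_tendsto hlim
    filter_upwards with m
    calc F n - F (n + m) ≤ (∑ j ∈ Finset.range m, ((n + j : ℕ) : ℝ) ^ (-q)) * (q - 1) := hpartial m
      _ ≤ (∑' j : ℕ, ((n + j : ℕ) : ℝ) ^ (-q)) * (q - 1) := by
          apply mul_le_mul_of_nonneg_right _ hq1.le
          apply Summable.sum_le_tsum _ _ hsum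
          intro j _
          positivity
  · -- upper bound
    apply Summable.tsum_le_of_sum_range_le hsum
    intro m
    have hkey : ∀ m' : ℕ, (∑ j ∈ Finset.range m', ((n + j + 1 : ℕ) : ℝ) ^ (-q)) * (q - 1) ≤ F n := by
      intro m'
      have htel : (∑ j ∈ Finset.range m', (F (n + j) - F (n + j + 1))) = F n - F (n + m') := by
        have := Finset.sum_range_sub' (fun j => F (n + j)) m'
        simpa [add_assoc] using this
      have hFnn : 0 ≤ F (n + m') := by
        simp only [hF]
        positivity
      calc (∑ j ∈ Finset.range m', ((n + j + 1 : ℕ) : ℝ) ^ (-q)) * (q - 1)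
          = ∑ j ∈ Finset.range m', ((n + j + 1 : ℕ) : ℝ) ^ (-q) * (q - 1) := Finset.sum_mul ..
        _ ≤ ∑ j ∈ Finset.range m', (F (n + j) - F (n + j + 1)) := by
            apply Finset.sum_le_sum
            intro j _
            have := (hstep (n + j) (le_trans hn (Nat.le_add_right n j))).1
            push_cast at this ⊢
            convert this using 2 <;> push_cast <;> ring_nf
        _ = F n - F (n + m') := htel
        _ ≤ F n := by linarith
    cases m with
    | zero => simp; positivity
    | succ m' =>
      rw [Finset.sum_range_succ' (fun j => ((n + j : ℕ) : ℝ) ^ (-q)) m']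
      have h1 : (∑ j ∈ Finset.range m', ((n + (j + 1) : ℕ) : ℝ) ^ (-q)) ≤ F n / (q - 1) := by
        rw [le_div_iff₀ hq1]
        have := hkey m'
        convert this using 3 with j
        · rfl
        · rw [Nat.add_assoc]
      have h2 : ((n + 0 : ℕ) : ℝ) ^ (-q) = (n:ℝ) ^ (-q) := by norm_num
      simp only [h2]
      simp only [hF] at h1
      linarith [h1]

set_option maxHeartbeats 2000000 in
lemma core_tendsto (p : ℝ) (hp : 1 < p)
    (L : ℝ → ℝ) (hLmeas : Measurable L) (hLpos : ∀ x : ℝ, 0 < x → 0 < L x)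
    (hLslow : ∀ a : ℝ, 0 < a → Tendsto (fun x => L (a * x) / L x) atTop (nhds 1))
    (s : ℕ → ℝ) (hspos : ∀ n, 0 < s n)
    (hs : ∀ n : ℕ, 1 ≤ n → s n = (n : ℝ) ^ p * L n)
    (hsummable : ∀ n : ℕ, Summable fun j : ℕ => 1 / s (n + j)) :
    Tendsto (fun n : ℕ => (∑' j : ℕ, 1 / s (n + j)) * ((p - 1) * s n / n)) atTop (nhds 1) := by
  have hδ : (0:ℝ) < (p-1)/2 := by linarith
  set δ : ℝ := (p-1)/2 with hδdef
  set q' : ℝ := p - δ with hq'def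
  have hq' : 1 < q' := by rw [hq'def, hδdef]; linarith
  have hq'δ : q' - 1 = δ := by rw [hq'def, hδdef]; ring
  -- main claim
  have claim : ∀ ε : ℝ, 0 < ε → ε ≤ 1/2 → ∀ᶠ n : ℕ in atTop,
      |(∑' j : ℕ, 1 / s (n + j)) * ((p - 1) * s n / n) - 1| ≤ 6 * ε := by
    intro ε hε hε2
    obtain ⟨Y₀, hY₀1, hPot⟩ := L_potter L hLmeas hLpos hLslow δ hδ
    -- choose A
    have hAex : ∃ A : ℕ, 2 ≤ A ∧ ((A:ℝ)) ^ (1 - p) ≤ ε ∧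
        (p - 1) * Real.exp δ * ((A:ℝ)) ^ (-δ) / δ ≤ ε := by
      have h1 : Tendsto (fun A : ℕ => ((A:ℝ)) ^ (1 - p)) atTop (nhds 0) := by
        have := (tendsto_rpow_neg_atTop (by linarith : (0:ℝ) < p - 1)).comp
          tendsto_natCast_atTop_atTop
        apply this.congr; intro A; simp only [Function.comp]; congr 1; ring
      have h2 : Tendsto (fun A : ℕ => (p - 1) * Real.exp δ * ((A:ℝ)) ^ (-δ) / δ) atTop (nhds 0) := by
        have hb := (tendsto_rpow_neg_atTop hδ).comp tendsto_natCast_atTop_atTop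
        have := (hb.const_mul ((p - 1) * Real.exp δ)).div_const δ
        simpa using this
      obtain ⟨A, hA⟩ := ((eventually_ge_atTop 2).and ((h1.eventually_le_const hε).and
        (h2.eventually_le_const hε))).exists
      exact ⟨A, hA.1, hA.2.1, hA.2.2⟩
    obtain ⟨A, hA2, hAε1, hAε2⟩ := hAex
    obtain ⟨Y₁, hY₁1, hUnif⟩ := L_unif L hLmeas hLpos hLslow ε (A:ℝ) hε (by linarith) (by
      have h2A : (2:ℝ) ≤ (A:ℝ) := by exact_mod_cast hA2
      linarith)
    have hNev : ∀ᶠ n : ℕ in atTop, 1 ≤ n ∧ Y₀ ≤ (n:ℝ) ∧ Y₁ ≤ (n:ℝ) ∧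
        (p-1)/(n:ℝ) ≤ ε ∧ (p-1)*Real.exp δ/(n:ℝ) ≤ ε := by
      have e0 := eventually_ge_atTop 1
      have e1 := tendsto_natCast_atTop_atTop (R := ℝ) |>.eventually_ge_atTop Y₀
      have e2 := tendsto_natCast_atTop_atTop (R := ℝ) |>.eventually_ge_atTop Y₁
      have e3 : Tendsto (fun n : ℕ => (p-1)/(n:ℝ)) atTop (nhds 0) :=
        tendsto_const_div_atTop_nhds_zero_nat (p-1)
      have e4 : Tendsto (fun n : ℕ => (p-1)*Real.exp δ/(n:ℝ)) atTop (nhds 0) :=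
        tendsto_const_div_atTop_nhds_zero_nat _
      filter_upwards [e0, e1, e2, e3.eventually_le_const hε, e4.eventually_le_const hε] with n a b c d e
      exact ⟨a, b, c, d, e⟩
    filter_upwards [hNev] with n hn
    obtain ⟨hn1, hnY₀, hnY₁, hne1, hne2⟩ := hn
    have hnR : (0:ℝ) < (n:ℝ) := by exact_mod_cast hn1
    set nR : ℝ := (n:ℝ) with hnRdef
    have hLn : 0 < L nR := hLpos _ hnR
    set m : ℕ := A * n with hmdef
    have hApos : 0 < A := by omega
    have hnm : n ≤ m := Nat.le_mul_of_pos_left n hApos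
    have hm1 : 1 ≤ m := le_trans hn1 hnm
    set k : ℕ := m - n with hkdef
    have hidx : ∀ j : ℕ, n + (j + k) = m + j := by intro j; omega
    set a : ℝ := (A:ℝ) with hadef
    have ha2 : (2:ℝ) ≤ a := by rw [hadef]; exact_mod_cast hA2
    have ha0 : (0:ℝ) < a := by linarith
    have ha1 : (1:ℝ) ≤ a := by linarith
    have hmR : (m:ℝ) = a * nR := by rw [hmdef, hadef, hnRdef]; push_cast; ring
    -- sums
    set W : ℝ := ∑' j : ℕ, 1 / s (n + j) with hWdef
    set Wt : ℝ := ∑' j : ℕ, 1 / s (m + j) with hWtdef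
    set Sm : ℝ := ∑ j ∈ Finset.range k, 1 / s (n + j) with hSmdef
    have hsplit : Sm + Wt = W := by
      have h0 := Summable.sum_add_tsum_nat_add (f := fun j => 1 / s (n + j)) k (hsummable n)
      have h1 : (∑' j : ℕ, 1 / s (n + (j + k))) = Wt := by
        rw [hWtdef]
        apply tsum_congr
        intro j
        rw [hidx j]
      rw [hWdef, ← h0, hSmdef, ← h1]
    obtain ⟨hgsum_n, hglo_n, hgup_n⟩ := tail_sum_bounds p hp n hn1
    obtain ⟨hgsum_m, hglo_m, hgup_m⟩ := tail_sum_bounds p hp m hm1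
    obtain ⟨hg'sum_m, hg'lo_m, hg'up_m⟩ := tail_sum_bounds q' hq' m hm1
    set u1 : ℝ := ∑' j : ℕ, ((n + j : ℕ) : ℝ) ^ (-p) with hu1def
    set u2 : ℝ := ∑' j : ℕ, ((m + j : ℕ) : ℝ) ^ (-p) with hu2def
    set v : ℝ := ∑' j : ℕ, ((m + j : ℕ) : ℝ) ^ (-q') with hvdef
    set Sg : ℝ := ∑ j ∈ Finset.range k, ((n + j : ℕ) : ℝ) ^ (-p) with hSgdef
    have hSg : Sg + u2 = u1 := by
      have h0 := Summable.sum_add_tsum_nat_add (f := fun j : ℕ => ((n + j : ℕ) : ℝ) ^ (-p)) k hgsum_n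
      have h1 : (∑' j : ℕ, ((n + (j + k) : ℕ) : ℝ) ^ (-p)) = u2 := by
        rw [hu2def]
        apply tsum_congr
        intro j
        rw [hidx j]
      rw [hu1def, ← h0, hSgdef, ← h1]
    -- termwise bounds, main block
    have hterm : ∀ j ∈ Finset.range k,
        (1 / s (n + j)) * ((1 - ε) * L nR) ≤ ((n + j : ℕ) : ℝ) ^ (-p) ∧
        ((n + j : ℕ) : ℝ) ^ (-p) ≤ (1 / s (n + j)) * ((1 + ε) * L nR) := by
      intro j hj
      have hjk : j < k := Finset.mem_range.1 hj
      set iR : ℝ := ((n + j : ℕ) : ℝ) with hiRdef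
      have hiR0 : (0:ℝ) < iR := by
        rw [hiRdef]; exact_mod_cast Nat.lt_of_lt_of_le Nat.zero_lt_one (le_trans hn1 (Nat.le_add_right n j))
      have hni : (n:ℕ) ≤ n + j := Nat.le_add_right n j
      have hniR : nR ≤ iR := by rw [hiRdef, hnRdef]; exact_mod_cast hni
      have him : n + j ≤ m := by omega
      have hiRm : iR ≤ a * nR := by rw [← hmR, hiRdef]; exact_mod_cast him
      have hu1' : 1 ≤ iR / nR := (le_div_iff₀ hnR).2 (by linarith only [hniR])
      have huA : iR / nR ≤ a := (div_le_iff₀ hnR).2 hiRm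
      have huy : iR / nR * nR = iR := div_mul_cancel₀ iR (ne_of_gt hnR)
      obtain ⟨hLlo, hLup⟩ := hUnif nR hnY₁ (iR / nR) hu1' huA
      rw [huy] at hLlo hLup
      have hLi : 0 < L iR := hLpos _ hiR0
      have hiRp : 0 < iR ^ p := Real.rpow_pos_of_pos hiR0 p
      have hsi : s (n + j) = iR ^ p * L iR := hs (n + j) (le_trans hn1 hni)
      have hneg : iR ^ (-p) = (iR ^ p)⁻¹ := by
        rw [Real.rpow_neg hiR0.le]
      constructor
      · rw [hsi, hneg, one_div]
        calc (iR ^ p * L iR)⁻¹ * ((1 - ε) * L nR)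
            ≤ (iR ^ p * L iR)⁻¹ * L iR := by
              apply mul_le_mul_of_nonneg_left hLlo
              positivity
          _ = (iR ^ p)⁻¹ := by
              rw [mul_inv, mul_assoc, inv_mul_cancel₀ (ne_of_gt hLi), mul_one]
      · rw [hsi, hneg, one_div]
        calc (iR ^ p)⁻¹ = (iR ^ p * L iR)⁻¹ * L iR := by
              rw [mul_inv, mul_assoc, inv_mul_cancel₀ (ne_of_gt hLi), mul_one]
          _ ≤ (iR ^ p * L iR)⁻¹ * ((1 + ε) * L nR) := by
              apply mul_le_mul_of_nonneg_left hLup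
              positivity
    have hSm_up : Sm * ((1 - ε) * L nR) ≤ Sg := by
      rw [hSmdef, hSgdef, Finset.sum_mul]
      exact Finset.sum_le_sum (fun j hj => (hterm j hj).1)
    have hSm_lo : Sg ≤ Sm * ((1 + ε) * L nR) := by
      rw [hSmdef, hSgdef, Finset.sum_mul]
      exact Finset.sum_le_sum (fun j hj => (hterm j hj).2)
    -- termwise bound, tail block
    have httail : ∀ j : ℕ,
        (1 / s (m + j)) * L nR ≤ (Real.exp δ * nR ^ (-δ)) * ((m + j : ℕ) : ℝ) ^ (-q') := by
      intro j
      set iR : ℝ := ((m + j : ℕ) : ℝ) with hiRdef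
      have hiR0 : (0:ℝ) < iR := by
        rw [hiRdef]; exact_mod_cast Nat.lt_of_lt_of_le Nat.zero_lt_one (le_trans hm1 (Nat.le_add_right m j))
      have hniR : nR ≤ iR := by
        rw [hiRdef, hnRdef]; exact_mod_cast le_trans hnm (Nat.le_add_right m j)
      have hu1' : 1 ≤ iR / nR := (le_div_iff₀ hnR).2 (by linarith only [hniR])
      have huy : iR / nR * nR = iR := div_mul_cancel₀ iR (ne_of_gt hnR)
      have hPot' := hPot nR hnY₀ (iR / nR) hu1'
      rw [huy] at hPot'
      have hLi : 0 < L iR := hLpos _ hiR0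
      have hiRp : 0 < iR ^ p := Real.rpow_pos_of_pos hiR0 p
      have hsi : s (m + j) = iR ^ p * L iR :=
        hs (m + j) (le_trans hm1 (Nat.le_add_right m j))
      have hudelta : 0 < (iR / nR) ^ δ := Real.rpow_pos_of_pos (by positivity) δ
      have step1 : (1 / s (m + j)) * L nR
          ≤ (iR ^ p * L iR)⁻¹ * (Real.exp δ * (iR / nR) ^ δ * L iR) := by
        rw [hsi, one_div]
        apply mul_le_mul_of_nonneg_left hPot'
        positivity
      have step2 : (iR ^ p * L iR)⁻¹ * (Real.exp δ * (iR / nR) ^ δ * L iR)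
          = Real.exp δ * (iR / nR) ^ δ * (iR ^ p)⁻¹ := by
        field_simp
      have step3 : Real.exp δ * (iR / nR) ^ δ * (iR ^ p)⁻¹
          = (Real.exp δ * nR ^ (-δ)) * iR ^ (-q') := by
        have eiq : iR ^ (-q') = iR ^ δ * (iR ^ p)⁻¹ := by
          rw [← Real.rpow_neg hiR0.le p, ← Real.rpow_add hiR0]
          congr 1
          rw [hq'def]; ring
        rw [Real.div_rpow hiR0.le hnR.le, Real.rpow_neg hnR.le δ, eiq]
        ring
      calc (1 / s (m + j)) * L nR ≤ _ := step1
        _ = _ := step2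
        _ = _ := step3
    -- tsum versions
    have hWt0 : 0 ≤ Wt := by
      rw [hWtdef]
      exact tsum_nonneg (fun j => one_div_nonneg.2 (hspos _).le)
    have hSm0 : 0 ≤ Sm := by
      rw [hSmdef]
      exact Finset.sum_nonneg (fun j _ => one_div_nonneg.2 (hspos _).le)
    have hu20 : 0 ≤ u2 := by
      rw [hu2def]
      exact tsum_nonneg (fun j => Real.rpow_nonneg (Nat.cast_nonneg _) _)
    have hWt_up : Wt * L nR ≤ (Real.exp δ * nR ^ (-δ)) * v := by
      have h1 : Wt * L nR = ∑' j : ℕ, (1 / s (m + j)) * L nR := by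
        rw [hWtdef]; exact (tsum_mul_right).symm
      have h2 : (Real.exp δ * nR ^ (-δ)) * v
          = ∑' j : ℕ, (Real.exp δ * nR ^ (-δ)) * ((m + j : ℕ) : ℝ) ^ (-q') := by
        rw [hvdef]; exact (tsum_mul_left).symm
      rw [h1, h2]
      apply Summable.tsum_le_tsum httail ((hsummable m).mul_right _) (hg'sum_m.mul_left _)
    -- numeric identities
    set P : ℝ := nR ^ (p - 1) with hPdef
    have hP0 : 0 < P := Real.rpow_pos_of_pos hnR _
    have hnpow : ∀ t u : ℝ, nR ^ t * nR ^ u = nR ^ (t + u) := fun t u => (Real.rpow_add hnR t u).symm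
    have hrpow_neg_one : nR ^ (-1 : ℝ) = 1 / nR := by
      rw [Real.rpow_neg hnR.le, Real.rpow_one, one_div]
    have hid1 : P * nR ^ (1 - p) = 1 := by
      rw [hPdef, hnpow]
      have : p - 1 + (1 - p) = 0 := by ring
      rw [this, Real.rpow_zero]
    have hid2 : P * nR ^ (-p) = 1 / nR := by
      rw [hPdef, hnpow]
      have : p - 1 + -p = -1 := by ring
      rw [this, hrpow_neg_one]
    have hid5 : P * ((m:ℝ)) ^ (-p) = a ^ (-p) / nR := by
      rw [hmR, Real.mul_rpow ha0.le hnR.le]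
      calc P * (a ^ (-p) * nR ^ (-p)) = a ^ (-p) * (P * nR ^ (-p)) := by ring
        _ = a ^ (-p) / nR := by rw [hid2]; ring
    have hid6 : P * ((m:ℝ)) ^ (1 - p) = a ^ (1 - p) := by
      rw [hmR, Real.mul_rpow ha0.le hnR.le]
      calc P * (a ^ (1-p) * nR ^ (1-p)) = a ^ (1-p) * (P * nR ^ (1-p)) := by ring
        _ = a ^ (1-p) := by rw [hid1]; ring
    have hid3 : P * nR ^ (-δ) * ((m:ℝ)) ^ (-q') = a ^ (-q') / nR := by
      rw [hmR, Real.mul_rpow ha0.le hnR.le, hPdef]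
      calc nR ^ (p-1) * nR ^ (-δ) * (a ^ (-q') * nR ^ (-q'))
          = a ^ (-q') * (nR ^ (p-1) * nR ^ (-δ) * nR ^ (-q')) := by ring
        _ = a ^ (-q') * nR ^ (p - 1 + -δ + -q') := by rw [hnpow, hnpow]
        _ = a ^ (-q') / nR := by
            have : p - 1 + -δ + -q' = -1 := by rw [hq'def]; ring
            rw [this, hrpow_neg_one]; ring
    have hid4 : P * nR ^ (-δ) * ((m:ℝ)) ^ (1 - q') = a ^ (-δ) := by
      rw [hmR, Real.mul_rpow ha0.le hnR.le, hPdef]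
      have h1q : (1 : ℝ) - q' = -δ := by rw [hq'def, hδdef]; ring
      calc nR ^ (p-1) * nR ^ (-δ) * (a ^ (1-q') * nR ^ (1-q'))
          = a ^ (1-q') * (nR ^ (p-1) * nR ^ (-δ) * nR ^ (1-q')) := by ring
        _ = a ^ (1-q') * nR ^ (p - 1 + -δ + (1-q')) := by rw [hnpow, hnpow]
        _ = a ^ (-δ) := by
            have : p - 1 + -δ + (1 - q') = 0 := by rw [hq'def, hδdef]; ring
            rw [this, Real.rpow_zero, h1q, mul_one]
    have hpP0 : 0 ≤ (p - 1) * P := mul_nonneg (by linarith only [hp]) hP0.le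
    -- bounds on u1, u2, v
    have hu1lo : 1 ≤ (p - 1) * P * u1 := by
      have h1 := mul_le_mul_of_nonneg_left hglo_n hpP0
      have hp1 : p - 1 ≠ 0 := ne_of_gt (by linarith only [hp])
      have h2 : (p - 1) * P * (nR ^ (1-p) / (p-1)) = P * nR ^ (1-p) := by
        field_simp
      rw [h2, hid1] at h1
      linarith only [h1]
    have hu1up : (p - 1) * P * u1 ≤ 1 + ε := by
      have h1 := mul_le_mul_of_nonneg_left hgup_n hpP0
      have h2 : (p - 1) * P * (nR ^ (-p) + nR ^ (1-p) / (p-1))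
          = (p-1) * (P * nR ^ (-p)) + P * nR ^ (1-p) := by
            have hp1 : p - 1 ≠ 0 := ne_of_gt (by linarith only [hp])
            field_simp
      rw [h2, hid1, hid2] at h1
      have h3 : (p - 1) * (1/nR) ≤ ε := by
        rw [← div_eq_mul_one_div]; exact hne1
      linarith only [h1, h3]
    have hu2up : (p - 1) * P * u2 ≤ 2 * ε := by
      have h1 := mul_le_mul_of_nonneg_left hgup_m hpP0
      have h2 : (p - 1) * P * (((m:ℝ)) ^ (-p) + ((m:ℝ)) ^ (1-p) / (p-1))
          = (p-1) * (P * ((m:ℝ)) ^ (-p)) + P * ((m:ℝ)) ^ (1-p) := by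
            have hp1 : p - 1 ≠ 0 := ne_of_gt (by linarith only [hp])
            field_simp
      rw [h2, hid5, hid6] at h1
      have hap1 : a ^ (-p) ≤ 1 := Real.rpow_le_one_of_one_le_of_nonpos ha1 (by linarith only [hp])
      have h3 : (p - 1) * (a ^ (-p) / nR) ≤ (p-1) * (1 / nR) :=
        mul_le_mul_of_nonneg_left ((div_le_div_iff_of_pos_right hnR).2 hap1) (by linarith only [hp])
      have h4 : (p - 1) * (1/nR) ≤ ε := by
        rw [← div_eq_mul_one_div]; exact hne1
      linarith only [h1, h3, h4, hAε1]
    have hvup : (p - 1) * P * (Real.exp δ * nR ^ (-δ) * v) ≤ 2 * ε := by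
      have hW0 : 0 ≤ Real.exp δ * nR ^ (-δ) := by positivity
      have h1 := mul_le_mul_of_nonneg_left hg'up_m hW0
      -- exp δ * nR^(-δ) * v ≤ exp δ * nR^(-δ) * (m^(-q') + m^(1-q')/δ)
      have h2 := mul_le_mul_of_nonneg_left h1 hpP0
      have h3 : (p-1) * P * (Real.exp δ * nR ^ (-δ) * (((m:ℝ)) ^ (-q') + ((m:ℝ)) ^ (1-q') / (q' - 1)))
          = (p-1) * Real.exp δ * (P * nR ^ (-δ) * ((m:ℝ)) ^ (-q'))
            + (p-1) * Real.exp δ * (P * nR ^ (-δ) * ((m:ℝ)) ^ (1-q')) / δ := by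
        rw [hq'δ]
        field_simp
      rw [h3, hid3, hid4] at h2
      have haq1 : a ^ (-q') ≤ 1 := Real.rpow_le_one_of_one_le_of_nonpos ha1 (by linarith only [hq'])
      have h4 : (p-1) * Real.exp δ * (a ^ (-q') / nR) ≤ (p-1) * Real.exp δ / nR := by
        have hpe : 0 ≤ (p-1) * Real.exp δ := mul_nonneg (by linarith only [hp]) (Real.exp_pos δ).le
        rw [div_eq_mul_one_div, mul_comm (a ^ (-q')) (1/nR), ← mul_assoc]
        calc (p-1) * Real.exp δ * (1/nR) * a ^ (-q') ≤ (p-1) * Real.exp δ * (1/nR) * 1 := by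
              apply mul_le_mul_of_nonneg_left haq1
                  (mul_nonneg hpe (by positivity))
          _ = (p-1) * Real.exp δ / nR := by ring
      have h5 : (p-1) * P * (Real.exp δ * nR ^ (-δ) * v)
          ≤ (p-1) * Real.exp δ * (a ^ (-q') / nR) + (p-1) * Real.exp δ * a ^ (-δ) / δ := by
        calc (p-1) * P * (Real.exp δ * nR ^ (-δ) * v) ≤ _ := h2
          _ = (p-1) * Real.exp δ * (a ^ (-q') / nR) + (p-1) * Real.exp δ * a ^ (-δ) / δ := by ring
      calc (p-1) * P * (Real.exp δ * nR ^ (-δ) * v)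
          ≤ (p-1) * Real.exp δ * (a ^ (-q') / nR) + (p-1) * Real.exp δ * a ^ (-δ) / δ := h5
        _ ≤ (p-1) * Real.exp δ / nR + (p-1) * Real.exp δ * a ^ (-δ) / δ := by linarith only [h4]
        _ ≤ ε + ε := add_le_add hne2 hAε2
        _ = 2 * ε := by ring
    -- core expression
    have hcore : W * ((p - 1) * s n / nR) = (Sm + Wt) * ((p-1) * P * L nR) := by
      rw [hsplit]
      congr 1
      rw [hs n hn1]
      rw [hPdef, Real.rpow_sub hnR, Real.rpow_one]
      field_simp
      ring
    rw [hcore]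
    -- final numeric squeeze
    set K : ℝ := (p-1) * P * L nR with hKdef
    have hK0 : 0 ≤ K := by positivity
    have hSmK_up : (Sm * K) * (1 - ε) ≤ 1 + ε := by
      have h1 : (Sm * K) * (1 - ε) = (p-1) * P * (Sm * ((1-ε) * L nR)) := by rw [hKdef]; ring
      have h2 := mul_le_mul_of_nonneg_left hSm_up hpP0
      have h3 : Sg = u1 - u2 := by linarith only [hSg]
      rw [h1]
      calc (p-1) * P * (Sm * ((1-ε) * L nR)) ≤ (p-1) * P * Sg := h2
        _ = (p-1) * P * u1 - (p-1) * P * u2 := by rw [h3]; ring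
        _ ≤ (1 + ε) - 0 := by
            have h0 : 0 ≤ (p-1) * P * u2 := mul_nonneg hpP0 hu20
            linarith only [h0, hu1up]
        _ = 1 + ε := by ring
    have hSmK_lo : 1 - 2 * ε ≤ (Sm * K) * (1 + ε) := by
      have h1 : (Sm * K) * (1 + ε) = (p-1) * P * (Sm * ((1+ε) * L nR)) := by rw [hKdef]; ring
      have h2 := mul_le_mul_of_nonneg_left hSm_lo hpP0
      have h3 : Sg = u1 - u2 := by linarith only [hSg]
      rw [h1]
      calc (1:ℝ) - 2 * ε ≤ (p-1) * P * u1 - (p-1) * P * u2 := by linarith only [hu1lo, hu2up]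
        _ = (p-1) * P * Sg := by rw [h3]; ring
        _ ≤ (p-1) * P * (Sm * ((1+ε) * L nR)) := h2
    have hWtK : Wt * K ≤ 2 * ε ∧ 0 ≤ Wt * K := by
      constructor
      · have h1 : Wt * K = (p-1) * P * (Wt * L nR) := by rw [hKdef]; ring
        rw [h1]
        calc (p-1) * P * (Wt * L nR) ≤ (p-1) * P * (Real.exp δ * nR ^ (-δ) * v) := by
              apply mul_le_mul_of_nonneg_left hWt_up hpP0
          _ ≤ 2 * ε := hvup
      · positivity
    have hSmK0 : 0 ≤ Sm * K := mul_nonneg hSm0 hK0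
    have h1ε : (0:ℝ) < 1 - ε := by linarith only [hε2]
    have h1ε' : (0:ℝ) < 1 + ε := by linarith only [hε]
    have hfin1 : Sm * K ≤ 1 + 4 * ε := by
      have ha : Sm * K ≤ (1 + ε)/(1 - ε) := (le_div_iff₀ h1ε).2 hSmK_up
      have hb : (1 + ε)/(1 - ε) ≤ 1 + 4 * ε := by
        rw [div_le_iff₀ h1ε]
        have key : 0 ≤ ε * (1 - 2*ε) := mul_nonneg hε.le (by linarith only [hε2])
        nlinarith only [key]
      linarith only [ha, hb]
    have hfin2 : 1 - 3 * ε ≤ Sm * K := by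
      have ha : (1 - 2*ε)/(1 + ε) ≤ Sm * K := (div_le_iff₀ h1ε').2 hSmK_lo
      have hb : 1 - 3 * ε ≤ (1 - 2*ε)/(1 + ε) := by
        rw [le_div_iff₀ h1ε']
        have key : 0 ≤ ε * ε := mul_nonneg hε.le hε.le
        nlinarith only [key]
      linarith only [ha, hb]
    have hXK : (Sm + Wt) * K = Sm * K + Wt * K := by ring
    rw [abs_le, hXK]
    constructor
    · linarith only [hWtK.1, hWtK.2, hfin1, hfin2, hε.le]
    · linarith only [hWtK.1, hWtK.2, hfin1, hfin2, hε.le]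
  rw [Metric.tendsto_atTop]
  intro ε₀ hε₀
  have hε : 0 < min (ε₀/12) (1/2) := lt_min (by linarith) (by norm_num)
  have hε2 : min (ε₀/12) (1/2) ≤ 1/2 := min_le_right _ _
  have h6 : 6 * min (ε₀/12) (1/2) < ε₀ := by
    have h7 : min (ε₀/12) (1/2) ≤ ε₀/12 := min_le_left _ _
    linarith
  obtain ⟨N, hN⟩ := Filter.eventually_atTop.1 (claim _ hε hε2)
  exact ⟨N, fun n hn => by rw [Real.dist_eq]; exact lt_of_le_of_lt (hN n hn) h6⟩

theorem stmt_7
    (p : ℝ) (hp : 1 < p)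
    (L : ℝ → ℝ) (hLmeas : Measurable L) (hLpos : ∀ x : ℝ, 0 < x → 0 < L x)
    (hLslow : ∀ a : ℝ, 0 < a → Tendsto (fun x => L (a * x) / L x) atTop (nhds 1))
    (s : ℕ → ℝ) (hspos : ∀ n, 0 < s n)
    (hs : ∀ n : ℕ, 1 ≤ n → s n = (n : ℝ) ^ p * L n)
    (G H : ℝ) (hG : 0 < G) (hH : 0 ≤ H)
    (f : ℕ → ℝ) (hf : ∀ i, f i = G * s i + H) :
    (∀ n : ℕ, Summable fun i : ℕ => 1 / f (n + i)) ∧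
      Tendsto (fun n : ℕ => (∑' i : ℕ, 1 / f (n + i)) * (G * (p - 1) * s n / n))
        atTop (nhds 1) := by
  have hδ : (0:ℝ) < (p-1)/2 := by linarith
  set δ : ℝ := (p-1)/2 with hδdef
  set q' : ℝ := p - δ with hq'def
  have hq' : 1 < q' := by rw [hq'def, hδdef]; linarith
  obtain ⟨Y₀, hY₀1, hPot⟩ := L_potter L hLmeas hLpos hLslow δ hδ
  have hY₀0 : (0:ℝ) < Y₀ := by linarith
  set c₀ : ℝ := L Y₀ * Y₀ ^ δ / Real.exp δ with hc₀def
  have hc₀ : 0 < c₀ := by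
    have := hLpos Y₀ hY₀0
    have := Real.rpow_pos_of_pos hY₀0 δ
    have := Real.exp_pos δ
    positivity
  set N₀ : ℕ := ⌈Y₀⌉₊ + 1 with hN₀def
  have hN₀R : Y₀ ≤ (N₀:ℝ) := by
    rw [hN₀def]
    push_cast
    linarith [Nat.le_ceil Y₀, Nat.cast_nonneg (α := ℝ) ⌈Y₀⌉₊]
  -- lower bound on s
  have hslow : ∀ i : ℕ, N₀ ≤ i → c₀ * (i:ℝ) ^ q' ≤ s i := by
    intro i hi
    have hiR : Y₀ ≤ (i:ℝ) := le_trans hN₀R (by exact_mod_cast hi)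
    have hiR0 : (0:ℝ) < (i:ℝ) := by linarith
    have hi1 : 1 ≤ i := by
      have : (1:ℝ) ≤ (i:ℝ) := by linarith
      exact_mod_cast this
    have hu1 : 1 ≤ (i:ℝ) / Y₀ := (le_div_iff₀ hY₀0).2 (by linarith)
    have huy : (i:ℝ) / Y₀ * Y₀ = (i:ℝ) := div_mul_cancel₀ _ (ne_of_gt hY₀0)
    have h := hPot Y₀ le_rfl ((i:ℝ)/Y₀) hu1
    rw [huy] at h
    have hE0 : 0 < Real.exp δ * ((i:ℝ)/Y₀) ^ δ :=
      mul_pos (Real.exp_pos δ) (Real.rpow_pos_of_pos (by positivity) δ)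
    have hLi : L Y₀ / (Real.exp δ * ((i:ℝ)/Y₀) ^ δ) ≤ L (i:ℝ) := (div_le_iff₀' hE0).2 h
    have hceq : c₀ * (i:ℝ) ^ (-δ) = L Y₀ / (Real.exp δ * ((i:ℝ)/Y₀) ^ δ) := by
      rw [hc₀def, Real.div_rpow hiR0.le hY₀0.le, Real.rpow_neg hiR0.le]
      have h1 : ((i:ℝ) ^ δ) ≠ 0 := ne_of_gt (Real.rpow_pos_of_pos hiR0 δ)
      have h2 : (Y₀ ^ δ) ≠ 0 := ne_of_gt (Real.rpow_pos_of_pos hY₀0 δ)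
      have h3 : Real.exp δ ≠ 0 := ne_of_gt (Real.exp_pos δ)
      field_simp
    have hLlow : c₀ * (i:ℝ) ^ (-δ) ≤ L (i:ℝ) := by rw [hceq]; exact hLi
    rw [hs i hi1]
    have hmul := mul_le_mul_of_nonneg_left hLlow (le_of_lt (Real.rpow_pos_of_pos hiR0 p))
    calc c₀ * (i:ℝ) ^ q' = (i:ℝ) ^ p * (c₀ * (i:ℝ) ^ (-δ)) := by
          rw [mul_comm ((i:ℝ)^p) _, mul_assoc, ← Real.rpow_add hiR0]
          congr 2
          rw [hq'def]; ring
      _ ≤ (i:ℝ) ^ p * L (i:ℝ) := hmul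
  -- positivity of f
  have hfpos : ∀ i, 0 < f i := by
    intro i
    rw [hf i]
    have := mul_pos hG (hspos i)
    linarith
  -- summability
  have hsum_pow : Summable (fun i : ℕ => (i:ℝ) ^ (-q')) :=
    Real.summable_nat_rpow.2 (by linarith)
  have hbound : ∀ i : ℕ, N₀ ≤ i → 1 / s i ≤ (1/c₀) * (i:ℝ) ^ (-q') := by
    intro i hi
    have hle := hslow i hi
    have hiR0 : (0:ℝ) < (i:ℝ) := by
      have : 0 < i := by omega
      exact_mod_cast this
    have hpow0 : (0:ℝ) < (i:ℝ) ^ q' := Real.rpow_pos_of_pos hiR0 q'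
    have h1 : 1 / s i ≤ 1 / (c₀ * (i:ℝ) ^ q') :=
      one_div_le_one_div_of_le (by positivity) hle
    have h2 : 1 / (c₀ * (i:ℝ) ^ q') = (1/c₀) * (i:ℝ) ^ (-q') := by
      rw [Real.rpow_neg hiR0.le]
      field_simp
    rw [h2] at h1
    exact h1
  have hs_all : Summable (fun i : ℕ => 1 / s i) := by
    rw [← summable_nat_add_iff N₀]
    apply Summable.of_nonneg_of_le (fun i => one_div_nonneg.2 (hspos _).le)
      (fun i => hbound (i + N₀) (Nat.le_add_left N₀ i))
    exact (((summable_nat_add_iff N₀).2 hsum_pow).mul_left (1/c₀))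
  have hssum : ∀ n : ℕ, Summable (fun j : ℕ => 1 / s (n + j)) := by
    intro n
    exact ((summable_nat_add_iff n).2 hs_all).congr (fun j => by rw [Nat.add_comm])
  have hfbound : ∀ i : ℕ, 1 / f i ≤ (1/G) * (1 / s i) := by
    intro i
    have h1 : G * s i ≤ f i := by rw [hf i]; linarith
    have h2 : 1 / f i ≤ 1 / (G * s i) :=
      one_div_le_one_div_of_le (mul_pos hG (hspos i)) h1
    calc 1 / f i ≤ 1 / (G * s i) := h2
      _ = (1/G) * (1/s i) := by rw [one_div_mul_eq_div, div_div]; ring_nf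
  have hfsum : ∀ n : ℕ, Summable (fun j : ℕ => 1 / f (n + j)) := by
    intro n
    apply Summable.of_nonneg_of_le (fun j => one_div_nonneg.2 (hfpos _).le)
      (fun j => hfbound (n + j))
    exact (hssum n).mul_left (1/G)
  refine ⟨hfsum, ?_⟩
  -- tendsto of s
  have hsT : Tendsto s atTop atTop := by
    apply tendsto_atTop_mono' atTop (f₁ := fun i : ℕ => c₀ * (i:ℝ) ^ q')
    · filter_upwards [eventually_ge_atTop N₀] with i hi using hslow i hi
    · have h1 : Tendsto (fun x : ℝ => c₀ * x ^ q') atTop atTop :=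
        (tendsto_rpow_atTop (by linarith : 0 < q')).const_mul_atTop hc₀
      exact h1.comp tendsto_natCast_atTop_atTop
  have hcore := core_tendsto p hp L hLmeas hLpos hLslow s hspos hs hssum
  -- comparison of the two sums
  have hD_le : ∀ n : ℕ, (∑' j : ℕ, 1 / f (n + j)) ≤ (1/G) * ∑' j : ℕ, 1 / s (n + j) := by
    intro n
    rw [← tsum_mul_left]
    exact Summable.tsum_le_tsum (fun j => hfbound (n + j)) (hfsum n) ((hssum n).mul_left _)
  have hW0 : ∀ n : ℕ, 0 ≤ ∑' j : ℕ, 1 / s (n + j) :=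
    fun n => tsum_nonneg (fun j => one_div_nonneg.2 (hspos _).le)
  have hD0 : ∀ n : ℕ, 0 ≤ ∑' j : ℕ, 1 / f (n + j) :=
    fun n => tsum_nonneg (fun j => one_div_nonneg.2 (hfpos _).le)
  rw [Metric.tendsto_atTop]
  intro ε₀ hε₀
  set ε : ℝ := min (ε₀/3) 1 with hεdef
  have hε : 0 < ε := lt_min (by linarith) one_pos
  have hε1 : ε ≤ 1 := min_le_right _ _
  have hε3 : ε ≤ ε₀/3 := min_le_left _ _
  -- eventually H ≤ ε G s i
  have hHev : ∀ᶠ i : ℕ in atTop, H ≤ ε * G * s i := by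
    have h1 : Tendsto (fun i : ℕ => ε * G * s i) atTop atTop :=
      hsT.const_mul_atTop (by positivity)
    exact h1.eventually_ge_atTop H
  obtain ⟨N₁, hN₁⟩ := eventually_atTop.1 hHev
  have hD_ge : ∀ n : ℕ, N₁ ≤ n →
      (1/((1+ε)*G)) * (∑' j : ℕ, 1 / s (n + j)) ≤ ∑' j : ℕ, 1 / f (n + j) := by
    intro n hn
    rw [← tsum_mul_left]
    apply Summable.tsum_le_tsum _ ((hssum n).mul_left _) (hfsum n)
    intro j
    have hsj := hspos (n + j)
    have hfle : f (n + j) ≤ (1+ε) * G * s (n + j) := by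
      rw [hf]
      have := hN₁ (n + j) (le_trans hn (Nat.le_add_right n j))
      nlinarith only [this, hsj, hG]
    have h2 : 1 / ((1+ε) * G * s (n + j)) ≤ 1 / f (n + j) :=
      one_div_le_one_div_of_le (hfpos _) hfle
    calc (1/((1+ε)*G)) * (1 / s (n + j)) = 1 / ((1+ε) * G * s (n + j)) := by
          rw [div_mul_div_comm, one_mul, mul_assoc]
      _ ≤ 1 / f (n + j) := h2
  have hcev := Metric.tendsto_atTop.1 hcore ε hε
  obtain ⟨N₂, hN₂⟩ := hcev
  refine ⟨max N₁ (max N₂ 1), fun n hn => ?_⟩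
  have hnN₁ : N₁ ≤ n := le_trans (le_max_left _ _) hn
  have hnN₂ : N₂ ≤ n := le_trans (le_trans (le_max_left _ _) (le_max_right _ _)) hn
  have hn1 : 1 ≤ n := le_trans (le_trans (le_max_right _ _) (le_max_right _ _)) hn
  have hnR : (0:ℝ) < (n:ℝ) := by exact_mod_cast hn1
  have hcb := hN₂ n hnN₂
  rw [Real.dist_eq] at hcb
  have hcb' := abs_lt.1 hcb
  set c : ℝ := (∑' j : ℕ, 1 / s (n + j)) * ((p-1) * s n / n) with hcdef
  set d : ℝ := (∑' i : ℕ, 1 / f (n + i)) * (G * (p - 1) * s n / (n:ℝ)) with hddef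
  have hX0 : 0 ≤ G * (p - 1) * s n / (n:ℝ) := by
    have h1 := (hspos n).le
    have h2 : (0:ℝ) ≤ p - 1 := by linarith
    positivity
  have hdn : d ≤ c := by
    rw [hddef, hcdef]
    calc (∑' i : ℕ, 1 / f (n + i)) * (G * (p - 1) * s n / (n:ℝ))
        ≤ ((1/G) * ∑' j : ℕ, 1 / s (n + j)) * (G * (p - 1) * s n / (n:ℝ)) :=
          mul_le_mul_of_nonneg_right (hD_le n) hX0
      _ = (∑' j : ℕ, 1 / s (n + j)) * ((p-1) * s n / n) := by
          field_simp
  have h1ε : (0:ℝ) < 1 + ε := by linarith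
  have hdn' : c / (1+ε) ≤ d := by
    rw [hddef, hcdef]
    calc ((∑' j : ℕ, 1 / s (n + j)) * ((p-1) * s n / n)) / (1+ε)
        = ((1/((1+ε)*G)) * ∑' j : ℕ, 1 / s (n + j)) * (G * (p - 1) * s n / (n:ℝ)) := by
          field_simp
      _ ≤ (∑' i : ℕ, 1 / f (n + i)) * (G * (p - 1) * s n / (n:ℝ)) :=
          mul_le_mul_of_nonneg_right (hD_ge n hnN₁) hX0
  rw [Real.dist_eq, abs_lt]
  have h3 : c ≤ d * (1+ε) := (div_le_iff₀ h1ε).1 hdn'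
  have h4 : d * ε ≤ (1+ε) * ε := by
    apply mul_le_mul_of_nonneg_right _ hε.le
    linarith only [hdn, hcb'.2]
  have h5 : ε * ε ≤ ε := by nlinarith only [hε1, hε.le]
  constructor
  · linarith only [h3, h4, h5, hcb'.1, hε3, hε₀]
  · linarith only [hdn, hcb'.2, hε3, hε₀]
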